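/- Let 0<q<1. For all x>0, one has (q^x log q)/(1-q^x) + log[x]_q < ψ_q(x) < log[x]_q. -/

import Mathlib

open Real

/-- The q-digamma function: ψ_q(x) = -log(1-q) + (log q)·∑_{n=1}^∞ q^{nx}/(1-q^n). -/
noncomputable def qDigamma (q x : ℝ) : ℝ :=
  -Real.log (1 - q) + Real.log q * ∑' n : ℕ, q ^ (((n : ℝ) + 1) * x) / (1 - q ^ (n + 1))

/-- The q-gamma function: Γ_q(x) = (q;q)_∞/(q^x;q)_∞ · (1-q)^{1-x}. -/
noncomputable def qGamma (q x : ℝ) : ℝ :=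
  ((∏' i : ℕ, (1 - q ^ (i + 1))) / ∏' i : ℕ, (1 - q ^ (x + (i : ℝ)))) * (1 - q) ^ (1 - x)

/-- The q-bracket: [x]_q = (1-q^x)/(1-q). -/
noncomputable def qBracket (q x : ℝ) : ℝ := (1 - q ^ x) / (1 - q)

lemma key1 {t : ℝ} (h0 : 0 < t) (h1 : t < 1) : 0 < 1 - t + t * Real.log t := by
  have h : Real.log t⁻¹ < t⁻¹ - 1 :=
    Real.log_lt_sub_one_of_pos (inv_pos.2 h0) (by
      intro h'; rw [inv_eq_one] at h'; simp [h'] at h1)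
  rw [Real.log_inv] at h
  have := (mul_lt_mul_of_pos_left h h0)
  rw [mul_sub, mul_inv_cancel₀ h0.ne'] at this
  nlinarith

lemma expand1 (A Q N L : ℝ) (hQ : 1 - Q ≠ 0) (hN : N ≠ 0) :
    L * (A / (1 - Q)) + A / N - L * A = A * ((1 - Q) + N * L * Q) / ((1 - Q) * N) := by
  field_simp
  ring

lemma expand2 (A Q N L : ℝ) (hQ : 1 - Q ≠ 0) (hN : N ≠ 0) :
    L * (A / (1 - Q)) + A / N = A * (N * L + (1 - Q)) / ((1 - Q) * N) := by
  field_simp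

/-- (q^x log q)/(1-q^x) + log[x]_q < ψ_q(x) < log[x]_q for x > 0. -/
theorem qDigamma_log_qBracket_bounds (q : ℝ) (hq0 : 0 < q) (hq1 : q < 1)
    (x : ℝ) (hx : 0 < x) :
    q ^ x * Real.log q / (1 - q ^ x) + Real.log (qBracket q x) < qDigamma q x ∧
    qDigamma q x < Real.log (qBracket q x) := by
  set a : ℝ := q ^ x with ha
  have ha0 : 0 < a := Real.rpow_pos_of_pos hq0 x
  have ha1 : a < 1 := Real.rpow_lt_one hq0.le hq1 hx
  have hrw : ∀ n : ℕ, q ^ (((n : ℝ) + 1) * x) = a ^ (n + 1) := by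
    intro n
    rw [ha, ← Real.rpow_natCast (q ^ x) (n + 1), ← Real.rpow_mul hq0.le]
    push_cast
    ring_nf
  have hqn : ∀ n : ℕ, 0 < 1 - q ^ (n + 1) := by
    intro n
    have : q ^ (n + 1) < 1 := pow_lt_one₀ hq0.le hq1 n.succ_ne_zero
    linarith
  have hqn0 : ∀ n : ℕ, 0 < q ^ (n + 1) := fun n => pow_pos hq0 _
  set f : ℕ → ℝ := fun n => a ^ (n + 1) / (1 - q ^ (n + 1)) with hf
  have hsum_geo : Summable (fun n : ℕ => a ^ (n + 1) / (1 - q)) := by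
    apply Summable.div_const
    exact (summable_geometric_of_lt_one ha0.le ha1).comp_injective (add_left_injective 1)
  have hle : ∀ n : ℕ, f n ≤ a ^ (n + 1) / (1 - q) := by
    intro n
    apply div_le_div_of_nonneg_left (by positivity) (by linarith)
    have : q ^ (n + 1) ≤ q := by
      calc q ^ (n + 1) ≤ q ^ 1 := pow_le_pow_of_le_one hq0.le hq1.le (by omega)
      _ = q := pow_one q
    linarith
  have hnn : ∀ n : ℕ, 0 ≤ f n := fun n => by
    have := hqn n; rw [hf]; positivity
  have hsum_f : Summable f := Summable.of_nonneg_of_le hnn hle hsum_geo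
  have hg : HasSum (fun n : ℕ => a ^ (n + 1) / (n + 1)) (-Real.log (1 - a)) :=
    hasSum_pow_div_log_of_abs_lt_one (by rw [abs_of_pos ha0]; exact ha1)
  have hgeo : HasSum (fun n : ℕ => Real.log q * a ^ (n + 1)) (Real.log q * (a * (1 - a)⁻¹)) := by
    have h0 : HasSum (fun n : ℕ => a ^ n) (1 - a)⁻¹ := hasSum_geometric_of_lt_one ha0.le ha1
    have := (h0.mul_left a).mul_left (Real.log q)
    convert this using 2 with n
    rfl
    ring
  set t : ℕ → ℝ := fun n => Real.log q * f n + a ^ (n + 1) / (n + 1) with ht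
  have hD : HasSum t (Real.log q * ∑' n, f n + -Real.log (1 - a)) :=
    ((hsum_f.hasSum).mul_left (Real.log q)).add hg
  have hDval : Real.log q * ∑' n, f n + -Real.log (1 - a)
      = qDigamma q x - Real.log (qBracket q x) := by
    rw [qDigamma, qBracket, Real.log_div (by linarith) (by linarith)]
    have : (∑' n : ℕ, q ^ (((n : ℝ) + 1) * x) / (1 - q ^ (n + 1))) = ∑' n, f n :=
      tsum_congr fun n => by rw [hrw n, hf]
    rw [this]
    ring
  have hlogq : Real.log q < 0 := Real.log_neg hq0 hq1
  constructor
  · -- lower bound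
    have hlt : ∀ n : ℕ, Real.log q * a ^ (n + 1) < t n := by
      intro n
      simp only [ht, hf]
      have hkey := key1 (hqn0 n) (by linarith [hqn n])
      rw [Real.log_pow] at hkey
      push_cast at hkey
      have hpos : 0 < Real.log q * (a ^ (n + 1) / (1 - q ^ (n + 1))) + a ^ (n + 1) / ((n : ℝ) + 1)
          - Real.log q * a ^ (n + 1) := by
        rw [expand1 _ _ _ _ (hqn n).ne' (by positivity)]
        apply div_pos
        · apply mul_pos (pow_pos ha0 _)
          nlinarith [hkey]
        · have := hqn n; positivity
      linarith
    have hlt' := hasSum_lt (fun n => (hlt n).le) (hlt 0) hgeo hD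
    rw [hDval] at hlt'
    have harith : a * Real.log q / (1 - a) = Real.log q * (a * (1 - a)⁻¹) := by
      field_simp
    linarith [hlt', harith]
  · -- upper bound
    have hlt : ∀ n : ℕ, t n < 0 := by
      intro n
      simp only [ht, hf]
      have hkey : Real.log (q ^ (n + 1)) < q ^ (n + 1) - 1 :=
        Real.log_lt_sub_one_of_pos (hqn0 n)
          (by have := hqn n; intro h; rw [h] at this; linarith)
      rw [Real.log_pow] at hkey
      push_cast at hkey
      rw [expand2 _ _ _ _ (hqn n).ne' (by positivity)]
      apply div_neg_of_neg_of_pos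
      · apply mul_neg_of_pos_of_neg (pow_pos ha0 _)
        nlinarith [hkey, hqn n]
      · have := hqn n; positivity
    have hlt' := hasSum_lt (fun n => (hlt n).le) (hlt 0) hD hasSum_zero
    rw [hDval] at hlt'
    linarith
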